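/- Let α_k satisfy the recurrences α_{k+1}⁺ ≥ α_k⁺ · 3·(1 − (4/3)sin²θ_k)·√(1 − 2^{−(k+5)}) and α_{k+1}⁻ ≤ α_k⁻ · 3 · 2^{−(k+5)/2}, where sin²θ_k = (α_k⁺)² + (α_k⁽~⁾)² + (α_k⁻)². Assume Σ_{k=1}^{m} ((α_k⁺)² + (α_k⁽~⁾)²) ≤ 1/40 and (α_1⁻)² ≤ 1/5. Then by induction (α_k⁻)² ≤ (1/5)·(3/8)^{k−1} and sin²θ_k ≤ 9/40 < 3/4 for all k ∈ [1,m], and consequently α_m⁺ > α_1⁺ · 3^{m−1}/2. In particular, if (α_1⁺)² ≥ 9/(10n) and m = ⌈log₉ n⌉, then (α_m⁺)² > 1/40, contradicting the assumption; hence Σ_{k=1}^{⌈log₉ n⌉} ((α_k⁺)² + (α_k⁽~⁾)²) > 1/40 whenever (α_1⁺)² ≥ 9/(10n). -/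

import Mathlib

private lemma amp_aux_fac (a b c : ℝ) (ha : 0 ≤ a) (hb : 0 ≤ b) (hc : 0 ≤ c)
    (hc1 : c ≤ 1) :
    3 * (1 - (a + (b + c))) ≤ (1 - a) * (3 * (1 - b)) * (1 - c) := by
  nlinarith [mul_nonneg ha hb, mul_nonneg ha hc, mul_nonneg hb hc,
    mul_nonneg (mul_nonneg ha hb) (sub_nonneg.mpr hc1)]

set_option maxHeartbeats 1000000 in
/-- **amplitude-amplification invariant.**
Let `αp, αs, αm` (the amplitudes `α_k⁺, α_k⁽~⁾, α_k⁻`) be nonnegative reals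
with `s k = (α_k⁺)² + (α_k⁽~⁾)² + (α_k⁻)²` (`= sin²θ_k`) satisfying the
recurrences
`α_{k+1}⁺ ≥ α_k⁺ · 3(1 − (4/3)·s k) · √(1 − 2^{−(k+5)})` and
`α_{k+1}⁻ ≤ α_k⁻ · 3 · 2^{−(k+5)/2}`, with `(α_1⁻)² ≤ 1/5`, and let
`m = ⌈log₉ n⌉`.  If `Σ_{k=1}^{m}((α_k⁺)² + (α_k⁽~⁾)²) ≤ 1/40`, then by
induction `(α_k⁻)² ≤ (1/5)(3/8)^{k−1}` and `s k ≤ 9/40 < 3/4` for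
`k ∈ [1,m]`, and consequently `α_m⁺ > α_1⁺·3^{m−1}/2` (when `α_1⁺ > 0`).
In particular, if `(α_1⁺)² ≥ 9/(10n)`, this yields a contradiction; hence
`Σ_{k=1}^{⌈log₉ n⌉}((α_k⁺)² + (α_k⁽~⁾)²) > 1/40` whenever
`(α_1⁺)² ≥ 9/(10n)`. -/
theorem amplitude_amplification_invariant
    (n m : ℕ) (hn : 2 ≤ n) (hm : m = ⌈Real.logb 9 n⌉₊)
    (αp αs αm : ℕ → ℝ)
    (hαp : ∀ k, 0 ≤ αp k) (hαs : ∀ k, 0 ≤ αs k) (hαm : ∀ k, 0 ≤ αm k)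
    (s : ℕ → ℝ)
    (hs : ∀ k, s k = (αp k) ^ 2 + (αs k) ^ 2 + (αm k) ^ 2)
    (hrec1 : ∀ k, 1 ≤ k →
      αp k * (3 * (1 - (4 / 3) * s k)) * Real.sqrt (1 - (1 / 2) ^ (k + 5)) ≤
        αp (k + 1))
    (hrec2 : ∀ k, 1 ≤ k →
      αm (k + 1) ≤ αm k * 3 * Real.sqrt ((1 / 2) ^ (k + 5)))
    (hαm1 : (αm 1) ^ 2 ≤ 1 / 5) :
    ((∑ k ∈ Finset.Icc 1 m, ((αp k) ^ 2 + (αs k) ^ 2)) ≤ 1 / 40 →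
      (∀ k, 1 ≤ k → k ≤ m →
        (αm k) ^ 2 ≤ (1 / 5) * (3 / 8) ^ (k - 1) ∧ s k ≤ 9 / 40) ∧
      (0 < αp 1 → αp 1 * 3 ^ (m - 1) / 2 < αp m)) ∧
    (9 / (10 * n) ≤ (αp 1) ^ 2 →
      1 / 40 < ∑ k ∈ Finset.Icc 1 m, ((αp k) ^ 2 + (αs k) ^ 2)) := by
  have hn1 : (1:ℝ) < n := by exact_mod_cast Nat.one_lt_cast.mpr (by omega)
  have hm1 : 1 ≤ m := by
    rw [hm]
    exact Nat.ceil_pos.mpr (Real.logb_pos (by norm_num) hn1)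
  -- Part A as a `have`
  have mainA : (∑ k ∈ Finset.Icc 1 m, ((αp k) ^ 2 + (αs k) ^ 2)) ≤ 1 / 40 →
      (∀ k, 1 ≤ k → k ≤ m →
        (αm k) ^ 2 ≤ (1 / 5) * (3 / 8) ^ (k - 1) ∧ s k ≤ 9 / 40) ∧
      (0 < αp 1 → αp 1 * 3 ^ (m - 1) / 2 < αp m) := by
    intro hsum
    have hA : ∀ k, 1 ≤ k → k ≤ m → αp k ^ 2 + αs k ^ 2 ≤ 1 / 40 := by
      intro k h1 h2
      refine le_trans (Finset.single_le_sum (f := fun k => αp k ^ 2 + αs k ^ 2)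
        (fun i _ => by positivity) (Finset.mem_Icc.mpr ⟨h1, h2⟩)) hsum
    -- claim 1 : geometric decay of αm
    have hclaim1 : ∀ k, 1 ≤ k → k ≤ m → (αm k) ^ 2 ≤ (1 / 5) * (3 / 8) ^ (k - 1) := by
      intro k hk
      induction k, hk using Nat.le_induction with
      | base => intro _; simpa using hαm1
      | succ k hk ih =>
        intro hk1m
        have hkm : k ≤ m := by omega
        have h1 := ih hkm
        have h2 := hrec2 k hk
        have hsq : (αm (k+1)) ^ 2 ≤ (αm k * 3 * Real.sqrt ((1/2) ^ (k+5))) ^ 2 := by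
          apply pow_le_pow_left₀ (hαm (k+1)) h2
        rw [mul_pow, mul_pow, Real.sq_sqrt (by positivity)] at hsq
        have hp : ((1:ℝ)/2) ^ (k+5) ≤ (1/2) ^ 6 :=
          pow_le_pow_of_le_one (by norm_num) (by norm_num) (by omega)
        obtain ⟨t, rfl⟩ : ∃ t, k = t + 1 := ⟨k - 1, by omega⟩
        simp only [Nat.add_sub_cancel] at h1 ⊢
        have hpow : (0:ℝ) ≤ (3/8:ℝ) ^ t := by positivity
        have hmk : (0:ℝ) ≤ (αm (t+1)) ^ 2 := sq_nonneg _
        have hε0 : (0:ℝ) ≤ (1/2:ℝ) ^ (t+1+5) := by positivity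
        calc (αm (t+1+1)) ^ 2 ≤ (αm (t+1))^2 * 3^2 * (1/2)^(t+1+5) := hsq
          _ ≤ ((1/5) * (3/8)^t) * 3^2 * ((1/2:ℝ)^6) := by
              apply mul_le_mul _ hp hε0 (by positivity)
              apply mul_le_mul_of_nonneg_right h1 (by norm_num)
          _ ≤ (1/5) * (3/8) ^ (t+1) := by
              have e : ((3:ℝ)/8) ^ (t+1) = (3/8) ^ t * (3/8) := pow_succ _ _
              rw [e]; nlinarith [hpow]
    have hclaim : ∀ k, 1 ≤ k → k ≤ m →
        (αm k) ^ 2 ≤ (1 / 5) * (3 / 8) ^ (k - 1) ∧ s k ≤ 9 / 40 := by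
      intro k h1 h2
      have hc := hclaim1 k h1 h2
      refine ⟨hc, ?_⟩
      have hle1 : ((3:ℝ)/8) ^ (k-1) ≤ 1 := pow_le_one₀ (by norm_num) (by norm_num)
      have := hA k h1 h2
      rw [hs k]; nlinarith
    -- geometric sum bounds over Icc
    have hgeomA : ∀ i : ℕ, ∑ k ∈ Finset.Icc 1 i, (1/5) * ((3:ℝ)/8) ^ (k-1)
        ≤ 8/25 * (1 - (3/8) ^ i) := by
      intro i
      induction i with
      | zero => simp
      | succ i ih =>
        rw [Finset.sum_Icc_succ_top (by omega)]
        simp only [Nat.add_sub_cancel]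
        have e : ((3:ℝ)/8) ^ (i+1) = (3/8) ^ i * (3/8) := pow_succ _ _
        rw [e]
        nlinarith [ih]
    have hgeomE : ∀ i : ℕ, ∑ k ∈ Finset.Icc 1 i, ((1:ℝ)/2) ^ (k+5)
        ≤ 1/32 * (1 - (1/2) ^ i) := by
      intro i
      induction i with
      | zero => simp
      | succ i ih =>
        rw [Finset.sum_Icc_succ_top (by omega)]
        have : ((1:ℝ)/2) ^ (i+1+5) = (1/2:ℝ)^6 * (1/2)^i := by ring
        rw [this]
        have e : ((1:ℝ)/2) ^ (i+1) = (1/2) ^ i * (1/2) := pow_succ _ _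
        rw [e]
        nlinarith [ih]
    -- total sum bound
    have hT : ∀ i : ℕ, i ≤ m →
        ∑ k ∈ Finset.Icc 1 i, ((4/3) * s k + ((1:ℝ)/2) ^ (k+5)) ≤ 393/800 := by
      intro i hi
      rw [Finset.sum_add_distrib]
      have h1 : ∑ k ∈ Finset.Icc 1 i, (4/3) * s k
          = (4/3) * ((∑ k ∈ Finset.Icc 1 i, ((αp k)^2 + (αs k)^2))
              + ∑ k ∈ Finset.Icc 1 i, (αm k)^2) := by
        rw [← Finset.sum_add_distrib, Finset.mul_sum]
        apply Finset.sum_congr rfl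
        intro k _; rw [hs k]; try ring
      have h2 : ∑ k ∈ Finset.Icc 1 i, ((αp k)^2 + (αs k)^2) ≤ 1/40 := by
        refine le_trans (Finset.sum_le_sum_of_subset_of_nonneg
          (Finset.Icc_subset_Icc_right hi) (fun j _ _ => by positivity)) hsum
      have h3 : ∑ k ∈ Finset.Icc 1 i, (αm k)^2
          ≤ ∑ k ∈ Finset.Icc 1 i, (1/5) * ((3:ℝ)/8) ^ (k-1) := by
        apply Finset.sum_le_sum
        intro k hk
        rw [Finset.mem_Icc] at hk
        exact hclaim1 k hk.1 (le_trans hk.2 hi)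
      have h4 := hgeomA i
      have h5 := hgeomE i
      have hp1 : (0:ℝ) ≤ (3/8:ℝ) ^ i := by positivity
      have hp2 : (0:ℝ) ≤ (1/2:ℝ) ^ i := by positivity
      rw [h1]
      nlinarith
    have hTnn : ∀ i : ℕ, (0:ℝ) ≤ ∑ k ∈ Finset.Icc 1 i, ((4/3) * s k + ((1:ℝ)/2) ^ (k+5)) := by
      intro i
      apply Finset.sum_nonneg
      intro k _
      have : 0 ≤ s k := by rw [hs k]; positivity
      positivity
    -- growth of αp
    have hG : ∀ j, 1 ≤ j → j ≤ m →
        αp 1 * 3 ^ (j-1) * (1 - ∑ k ∈ Finset.Icc 1 (j-1), ((4/3) * s k + ((1:ℝ)/2) ^ (k+5)))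
          ≤ αp j := by
      intro j hj
      induction j, hj using Nat.le_induction with
      | base => intro _; simp
      | succ j hj ih =>
        intro hj1m
        have hjm : j ≤ m := by omega
        obtain ⟨t, rfl⟩ : ∃ t, j = t + 1 := ⟨j - 1, by omega⟩
        simp only [Nat.add_sub_cancel] at ih ⊢
        set T := ∑ k ∈ Finset.Icc 1 t, ((4/3) * s k + ((1:ℝ)/2) ^ (k+5)) with hTdef
        have hTle : T ≤ 393/800 := hT t (by omega)
        have hT0 : 0 ≤ T := hTnn t
        have hsj : s (t+1) ≤ 9/40 := (hclaim (t+1) (by omega) hjm).2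
        have hsj0 : 0 ≤ s (t+1) := by rw [hs]; positivity
        have hε : ((1:ℝ)/2) ^ (t+1+5) ≤ 1/64 := by
          calc ((1:ℝ)/2) ^ (t+1+5) ≤ (1/2:ℝ)^6 :=
            pow_le_pow_of_le_one (by norm_num) (by norm_num) (by omega)
          _ = 1/64 := by norm_num
        have hε0 : (0:ℝ) ≤ ((1:ℝ)/2) ^ (t+1+5) := by positivity
        have hb0 : (0:ℝ) ≤ 3 * (1 - (4/3) * s (t+1)) := by nlinarith
        have hsqrt : 1 - ((1:ℝ)/2) ^ (t+1+5) ≤ Real.sqrt (1 - (1/2) ^ (t+1+5)) := by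
          have h01 : (0:ℝ) ≤ 1 - (1/2) ^ (t+1+5) := by linarith
          nth_rewrite 1 [← Real.sqrt_sq h01]
          apply Real.sqrt_le_sqrt
          nlinarith
        -- step: from ih to αp (t+2)
        have step1 : αp 1 * 3 ^ t * (1 - T) * (3 * (1 - (4/3) * s (t+1)))
            * Real.sqrt (1 - (1/2) ^ (t+1+5)) ≤ αp (t+1+1) := by
          refine le_trans ?_ (hrec1 (t+1) (by omega))
          apply mul_le_mul_of_nonneg_right _ (Real.sqrt_nonneg _)
          exact mul_le_mul_of_nonneg_right (ih hjm) hb0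
        rw [Finset.sum_Icc_succ_top (by omega : 1 ≤ t + 1)]
        have hnn2 : (0:ℝ) ≤ αp 1 * 3 ^ t * (1 - T) * (3 * (1 - (4/3) * s (t+1))) := by
          have h1T : (0:ℝ) ≤ 1 - T := by linarith
          have := hαp 1
          positivity
        have step2 : αp 1 * 3 ^ t * (1 - T) * (3 * (1 - (4/3) * s (t+1)))
            * (1 - (1/2) ^ (t+1+5))
            ≤ αp 1 * 3 ^ t * (1 - T) * (3 * (1 - (4/3) * s (t+1)))
            * Real.sqrt (1 - (1/2) ^ (t+1+5)) :=
          mul_le_mul_of_nonneg_left hsqrt hnn2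
        have hkey : αp 1 * 3 ^ (t+1) * (1 - (T + ((4/3) * s (t+1) + (1/2) ^ (t+1+5))))
            ≤ αp 1 * 3 ^ t * (1 - T) * (3 * (1 - (4/3) * s (t+1)))
            * (1 - (1/2) ^ (t+1+5)) := by
          have hfac : 3 * (1 - (T + ((4/3) * s (t+1) + (1/2) ^ (t+1+5))))
              ≤ (1 - T) * (3 * (1 - (4/3) * s (t+1))) * (1 - (1/2) ^ (t+1+5)) :=
            amp_aux_fac _ _ _ hT0 (by linarith) hε0 (by linarith)
          have h0 : (0:ℝ) ≤ αp 1 * 3 ^ t := by have := hαp 1; positivity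
          calc αp 1 * 3 ^ (t+1) * (1 - (T + ((4/3) * s (t+1) + (1/2) ^ (t+1+5))))
              = (αp 1 * 3 ^ t) * (3 * (1 - (T + ((4/3) * s (t+1) + (1/2) ^ (t+1+5))))) := by
                ring
            _ ≤ (αp 1 * 3 ^ t) * ((1 - T) * (3 * (1 - (4/3) * s (t+1))) * (1 - (1/2) ^ (t+1+5))) :=
                mul_le_mul_of_nonneg_left hfac h0
            _ = αp 1 * 3 ^ t * (1 - T) * (3 * (1 - (4/3) * s (t+1))) * (1 - (1/2) ^ (t+1+5)) := by
                ring
        exact le_trans hkey (le_trans step2 step1)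
    refine ⟨hclaim, ?_⟩
    intro hp1
    have hGm := hG m hm1 le_rfl
    have hTm := hT (m-1) (by omega)
    have hpos : (0:ℝ) < αp 1 * 3 ^ (m-1) := by positivity
    nlinarith [hGm, hpos, mul_le_mul_of_nonneg_left hTm hpos.le]
  refine ⟨mainA, ?_⟩
  -- Part B
  intro h9
  by_contra hcon
  push_neg at hcon
  have hnpos : (0:ℝ) < n := by positivity
  have hp1 : 0 < αp 1 := by
    have h0 : (0:ℝ) < 9 / (10 * n) := by positivity
    rcases (hαp 1).eq_or_lt with h | h
    · rw [← h] at h9; norm_num at h9; nlinarith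
    · exact h
  obtain ⟨hclaims, hgrow⟩ := mainA hcon
  have hlt := hgrow hp1
  have hAm : αp m ^ 2 + αs m ^ 2 ≤ 1 / 40 :=
    le_trans (Finset.single_le_sum (f := fun k => αp k ^ 2 + αs k ^ 2)
      (fun i _ => by positivity) (Finset.mem_Icc.mpr ⟨hm1, le_rfl⟩)) hcon
  -- n ≤ 9^m
  have h9m : (n:ℝ) ≤ 9 ^ m := by
    have hlog : Real.logb 9 n ≤ (m:ℝ) := by
      rw [hm]; exact Nat.le_ceil _
    have h1 : (9:ℝ) ^ (Real.logb 9 n) ≤ (9:ℝ) ^ (m:ℝ) :=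
      (Real.rpow_le_rpow_left_iff (by norm_num)).mpr hlog
    rw [Real.rpow_logb (by norm_num) (by norm_num) (by positivity), Real.rpow_natCast] at h1
    exact h1
  obtain ⟨t, rfl⟩ : ∃ t, m = t + 1 := ⟨m - 1, by omega⟩
  simp only [Nat.add_sub_cancel] at hlt
  have h9t : (9:ℝ) ^ t = ((3:ℝ) ^ t) ^ 2 := by
    rw [show (9:ℝ) = 3^2 by norm_num, ← pow_mul, ← pow_mul, Nat.mul_comm]
  have hq : (αp 1 * 3 ^ t / 2) ^ 2 < αp (t+1) ^ 2 := by
    have h3pos : (0:ℝ) < αp 1 * 3 ^ t / 2 := by positivity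
    nlinarith [hlt, h3pos]
  have h9pow : (9:ℝ) ^ (t+1) = 9 * ((3:ℝ)^t)^2 := by rw [pow_succ, h9t]; ring
  rw [h9pow] at h9m
  have hpt : (0:ℝ) < ((3:ℝ)^t)^2 := by positivity
  have hmul : (9 / (10 * (n:ℝ))) * ((3:ℝ)^t)^2 ≤ αp 1 ^ 2 * ((3:ℝ)^t)^2 :=
    mul_le_mul_of_nonneg_right h9 (le_of_lt hpt)
  have hfinal : (1:ℝ)/40 < αp (t+1) ^ 2 := by
    have hexp : (αp 1 * 3 ^ t / 2) ^ 2 = αp 1 ^ 2 * ((3:ℝ)^t)^2 / 4 := by ring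
    have hdiv : 9 * ((3:ℝ)^t)^2 / (40 * n) = (9 / (10 * (n:ℝ))) * ((3:ℝ)^t)^2 / 4 := by
      field_simp
      ring
    have hlow : (1:ℝ)/40 ≤ 9 * ((3:ℝ)^t)^2 / (40 * n) := by
      rw [div_le_div_iff₀ (by norm_num) (by positivity)]
      nlinarith [h9m]
    nlinarith [hq]
  nlinarith [hfinal, hAm, sq_nonneg (αs (t+1))]
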